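/- Let S be an operator satisfying S = Q₀SP₀ where P₀ is the zero-eigenspace projector of a Hermitian H₀ with spectral gap Δ and pseudoinverse R₀, W Hermitian, H := H₀ + W, and H_eff := P₀WP₀ - P₀WR₀WP₀. Then ∫₀ᵗ e^{iHτ} S e^{-iH_eff τ} dτ = -i[e^{iHτ} R₀ S e^{-iH_eff τ}]₀ᵗ - ∫₀ᵗ e^{iHτ} P₀WR₀S e^{-iH_eff τ} dτ + ∫₀ᵗ e^{iHτ} S̃ e^{-iH_eff τ} dτ, where S̃ := -Q₀WR₀S + R₀SWP₀ - R₀SWR₀WP₀ satisfies S̃ = Q₀S̃P₀ and ‖S̃‖ ≤ (2‖W‖/Δ + ‖W‖²/Δ²)‖S‖. -/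

import Mathlib

open NormedSpace

private lemma eig_mem_spectrum' {E : Type*} [NormedAddCommGroup E] [InnerProductSpace ℂ E]
    (A : E →L[ℂ] E) (μ : ℂ) (v : E) (hv : v ≠ 0) (hAv : A v = μ • v) :
    μ ∈ spectrum ℂ A := by
  rw [spectrum.mem_iff]
  intro hU
  obtain ⟨U, hUeq⟩ := hU
  have h0 : (algebraMap ℂ (E →L[ℂ] E) μ - A) v = 0 := by
    simp [Algebra.algebraMap_eq_smul_one, ContinuousLinearMap.sub_apply, hAv,
      ContinuousLinearMap.smul_apply]
  have : v = 0 := by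
    have h1 : (↑U⁻¹ * (algebraMap ℂ (E →L[ℂ] E) μ - A)) v = v := by
      rw [← hUeq, U.inv_mul]; simp
    rw [ContinuousLinearMap.mul_apply, h0] at h1
    simpa using h1.symm
  exact hv this

private lemma gap_key' {E : Type*} [NormedAddCommGroup E] [InnerProductSpace ℂ E]
    [FiniteDimensional ℂ E]
    (H₀ P₀ : E →L[ℂ] E) (Δ : ℝ) (hΔ : 0 < Δ)
    (hH₀ : IsSelfAdjoint H₀) (hP₀sa : IsSelfAdjoint P₀)
    (hP₀ker : ∀ x : E, H₀ x = 0 ↔ P₀ x = x)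
    (hgap : ∀ μ ∈ spectrum ℂ H₀, μ ≠ 0 → Δ ≤ ‖μ‖) :
    ∀ y : E, (1 - P₀) y = y → Δ * ‖y‖ ≤ ‖H₀ y‖ := by
  intro y hy
  have hsymm : (↑H₀ : E →ₗ[ℂ] E).IsSymmetric := hH₀.isSymmetric
  have hn : Module.finrank ℂ E = Module.finrank ℂ E := rfl
  set b := hsymm.eigenvectorBasis hn with hb
  set μ := hsymm.eigenvalues hn with hμ
  have hzero : ∀ i, μ i = 0 → b.repr y i = 0 := by
    intro i hi
    have hbi : H₀ (b i) = 0 := by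
      have := hsymm.apply_eigenvectorBasis hn i
      rw [← hμ, ← hb] at this
      simpa [hi] using this
    have hPbi : P₀ (b i) = b i := (hP₀ker _).mp hbi
    have hQsa : IsSelfAdjoint ((1 : E →L[ℂ] E) - P₀) := (IsSelfAdjoint.one _).sub hP₀sa
    have h1 : (inner ℂ (b i) y : ℂ) = inner ℂ (((1:E →L[ℂ] E) - P₀) (b i)) y := by
      conv_lhs => rw [← hy]
      exact (hQsa.isSymmetric (b i) y).symm
    have h2 : ((1:E →L[ℂ] E) - P₀) (b i) = 0 := by
      simp [ContinuousLinearMap.sub_apply, hPbi]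
    rw [b.repr_apply_apply, h1, h2, inner_zero_left]
  have hsq : (Δ * ‖y‖) ^ 2 ≤ ‖H₀ y‖ ^ 2 := by
    have hy2 : ‖y‖ ^ 2 = ∑ i, ‖b.repr y i‖ ^ 2 := by
      rw [← b.repr.norm_map y, EuclideanSpace.norm_eq]
      rw [Real.sq_sqrt (by positivity)]
    have hHy2 : ‖H₀ y‖ ^ 2 = ∑ i, ‖(μ i : ℂ) * b.repr y i‖ ^ 2 := by
      rw [← b.repr.norm_map (H₀ y), EuclideanSpace.norm_eq, Real.sq_sqrt (by positivity)]
      congr 1; funext i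
      have h3 := hsymm.eigenvectorBasis_apply_self_apply hn y i
      rw [← hb, ← hμ] at h3
      rw [show b.repr (H₀ y) i = (μ i : ℂ) * b.repr y i from h3]
    rw [mul_pow, hy2, hHy2, Finset.mul_sum]
    apply Finset.sum_le_sum
    intro i _
    by_cases hc : b.repr y i = 0
    · simp [hc]
    · have hμi : μ i ≠ 0 := by
        intro h; exact hc (hzero i h)
      have hev : H₀ (b i) = ((μ i : ℂ)) • b i := by
        have := hsymm.apply_eigenvectorBasis hn i
        rw [← hμ, ← hb] at this; exact this
      have hΔμ : Δ ≤ ‖(μ i : ℂ)‖ := by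
        apply hgap _ (eig_mem_spectrum' H₀ _ (b i) ?_ hev)
        · exact_mod_cast hμi
        · exact b.toBasis.ne_zero i
      rw [norm_mul, mul_pow]
      have h1 : Δ ^ 2 ≤ ‖(μ i : ℂ)‖ ^ 2 := pow_le_pow_left₀ hΔ.le hΔμ 2
      nlinarith [sq_nonneg ‖b.repr y i‖, norm_nonneg (b.repr y i)]
  exact le_of_pow_le_pow_left₀ two_ne_zero (norm_nonneg _) hsq

private lemma contr_of_sa_idem {E : Type*} [NormedAddCommGroup E] [InnerProductSpace ℂ E]
    [FiniteDimensional ℂ E] (T : E →L[ℂ] E) (hsa : IsSelfAdjoint T) (hid : T * T = T) :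
    ∀ x : E, ‖T x‖ ≤ ‖x‖ := by
  intro x
  by_cases h0 : ‖T x‖ = 0
  · rw [h0]; exact norm_nonneg x
  · have hpos : 0 < ‖T x‖ := lt_of_le_of_ne (norm_nonneg _) (Ne.symm h0)
    have h1 : (‖T x‖ : ℝ) ^ 2 = RCLike.re (inner ℂ (T x) (T x) : ℂ) :=
      (inner_self_eq_norm_sq (𝕜 := ℂ) (T x)).symm
    have h3 : T (T x) = T x := by
      rw [← ContinuousLinearMap.mul_apply, hid]
    have h2 : (inner ℂ (T x) (T x) : ℂ) = inner ℂ x (T x) := by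
      exact (hsa.isSymmetric x (T x)).trans (congrArg (fun z => (inner ℂ x z : ℂ)) h3)
    have h4 : RCLike.re (inner ℂ x (T x) : ℂ) ≤ ‖x‖ * ‖T x‖ :=
      (RCLike.re_le_norm _).trans (norm_inner_le_norm x (T x))
    have h5 : ‖T x‖ ^ 2 ≤ ‖x‖ * ‖T x‖ := by rw [h1, h2]; exact h4
    nlinarith

private lemma aux_norm_mul_le {𝔸 : Type*} [NormedRing 𝔸] {a b : 𝔸} {A B : ℝ}
    (ha : ‖a‖ ≤ A) (hb : ‖b‖ ≤ B) : ‖a * b‖ ≤ A * B :=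
  (norm_mul_le a b).trans
    (mul_le_mul ha hb (norm_nonneg _) ((norm_nonneg a).trans ha))

set_option maxHeartbeats 1000000 in
theorem int_by_parts_trick
    {E : Type*} [NormedAddCommGroup E] [InnerProductSpace ℂ E] [FiniteDimensional ℂ E]
    (H₀ W P₀ R₀ S : E →L[ℂ] E) (Δ : ℝ) (hΔ : 0 < Δ)
    (hH₀ : IsSelfAdjoint H₀) (hW : IsSelfAdjoint W)
    (hP₀sa : IsSelfAdjoint P₀) (hP₀idem : P₀ * P₀ = P₀)
    (hP₀ker : ∀ x : E, H₀ x = 0 ↔ P₀ x = x)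
    (hgap : ∀ μ ∈ spectrum ℂ H₀, μ ≠ 0 → Δ ≤ ‖μ‖)
    (hR₀ : R₀ = (1 - P₀) * R₀ * (1 - P₀))
    (hR₀H₀ : R₀ * H₀ = 1 - P₀) (hH₀R₀ : H₀ * R₀ = 1 - P₀)
    (hS : S = (1 - P₀) * S * P₀) :
    let H := H₀ + W
    let Heff := P₀ * W * P₀ - P₀ * W * R₀ * W * P₀
    let Stilde := -((1 - P₀) * W * R₀ * S) + R₀ * S * W * P₀ - R₀ * S * W * R₀ * W * P₀
    (Stilde = (1 - P₀) * Stilde * P₀) ∧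
    (‖Stilde‖ ≤ (2 * ‖W‖ / Δ + ‖W‖ ^ 2 / Δ ^ 2) * ‖S‖) ∧
    (∀ t : ℝ,
      (∫ τ in (0:ℝ)..t, NormedSpace.exp ((Complex.I * (τ : ℂ)) • H) * S *
          NormedSpace.exp ((-(Complex.I) * (τ : ℂ)) • Heff))
      = -(Complex.I) •
          (NormedSpace.exp ((Complex.I * (t : ℂ)) • H) * (R₀ * S) *
              NormedSpace.exp ((-(Complex.I) * (t : ℂ)) • Heff)
            - R₀ * S)
        - (∫ τ in (0:ℝ)..t, NormedSpace.exp ((Complex.I * (τ : ℂ)) • H) *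
            (P₀ * W * R₀ * S) * NormedSpace.exp ((-(Complex.I) * (τ : ℂ)) • Heff))
        + (∫ τ in (0:ℝ)..t, NormedSpace.exp ((Complex.I * (τ : ℂ)) • H) * Stilde *
            NormedSpace.exp ((-(Complex.I) * (τ : ℂ)) • Heff))) := by
  intro H Heff Stilde
  -- basic algebraic facts
  have hQ2 : ((1:E →L[ℂ] E) - P₀) * (1 - P₀) = 1 - P₀ := by
    simp [sub_mul, mul_sub, hP₀idem]
  have hQS : ((1:E →L[ℂ] E) - P₀) * S = S := by
    conv_lhs => rw [hS, ← mul_assoc, ← mul_assoc, hQ2]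
    exact hS.symm
  have hSP : S * P₀ = S := by
    conv_lhs => rw [hS, mul_assoc, mul_assoc, hP₀idem, ← mul_assoc]
    exact hS.symm
  have hQR : ((1:E →L[ℂ] E) - P₀) * R₀ = R₀ := by
    conv_lhs => rw [hR₀, ← mul_assoc, ← mul_assoc, hQ2]
    exact hR₀.symm
  have hRSP : R₀ * S * P₀ = R₀ * S := by rw [mul_assoc, hSP]
  -- part 1
  have part1 : Stilde = (1 - P₀) * Stilde * P₀ := by
    have h1 : ((1:E →L[ℂ] E) - P₀) * Stilde = Stilde := by
      show ((1:E →L[ℂ] E) - P₀) *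
        (-((1 - P₀) * W * R₀ * S) + R₀ * S * W * P₀ - R₀ * S * W * R₀ * W * P₀) = _
      simp only [mul_add, mul_sub, mul_neg, ← mul_assoc, hQ2, hQR]
      rfl
    have h2 : Stilde * P₀ = Stilde := by
      show (-((1 - P₀) * W * R₀ * S) + R₀ * S * W * P₀ - R₀ * S * W * R₀ * W * P₀) * P₀ = _
      simp only [add_mul, sub_mul, neg_mul, mul_assoc, hP₀idem, hSP]
      rfl
    rw [h1, h2]
  refine ⟨part1, ?_, ?_⟩
  -- part 2 : norm bound
  · have hRn : ∀ x : E, ‖R₀ x‖ ≤ (1 / Δ) * ‖x‖ := by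
      intro x
      have hy : ((1:E →L[ℂ] E) - P₀) (R₀ x) = R₀ x := by
        rw [← ContinuousLinearMap.mul_apply, hQR]
      have hg := gap_key' H₀ P₀ Δ hΔ hH₀ hP₀sa hP₀ker hgap (R₀ x) hy
      have hHR : H₀ (R₀ x) = ((1:E →L[ℂ] E) - P₀) x := by
        rw [← ContinuousLinearMap.mul_apply, hH₀R₀]
      have hQc := contr_of_sa_idem (1 - P₀) ((IsSelfAdjoint.one _).sub hP₀sa) hQ2 x
      rw [hHR] at hg
      rw [div_mul_eq_mul_div, le_div_iff₀ hΔ]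
      calc ‖R₀ x‖ * Δ = Δ * ‖R₀ x‖ := by ring
        _ ≤ ‖((1:E →L[ℂ] E) - P₀) x‖ := hg
        _ ≤ ‖x‖ := hQc
        _ = 1 * ‖x‖ := (one_mul _).symm
    have hR₀op : ‖R₀‖ ≤ 1 / Δ := by
      apply ContinuousLinearMap.opNorm_le_bound _ (by positivity) hRn
    have hQop : ‖(1:E →L[ℂ] E) - P₀‖ ≤ 1 := by
      apply ContinuousLinearMap.opNorm_le_bound _ zero_le_one
      intro x
      rw [one_mul]
      exact contr_of_sa_idem (1 - P₀) ((IsSelfAdjoint.one _).sub hP₀sa) hQ2 x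
    have hPop : ‖P₀‖ ≤ 1 := by
      apply ContinuousLinearMap.opNorm_le_bound _ zero_le_one
      intro x
      rw [one_mul]
      exact contr_of_sa_idem P₀ hP₀sa hP₀idem x
    show ‖-((1 - P₀) * W * R₀ * S) + R₀ * S * W * P₀ - R₀ * S * W * R₀ * W * P₀‖ ≤ _
    have b1 : ‖(1 - P₀) * W * R₀ * S‖ ≤ ((1 * ‖W‖) * (1/Δ)) * ‖S‖ :=
      aux_norm_mul_le (aux_norm_mul_le (aux_norm_mul_le hQop le_rfl) hR₀op) le_rfl
    have b2 : ‖R₀ * S * W * P₀‖ ≤ (((1/Δ) * ‖S‖) * ‖W‖) * 1 :=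
      aux_norm_mul_le (aux_norm_mul_le (aux_norm_mul_le hR₀op le_rfl) le_rfl) hPop
    have b3 : ‖R₀ * S * W * R₀ * W * P₀‖ ≤ (((((1/Δ) * ‖S‖) * ‖W‖) * (1/Δ)) * ‖W‖) * 1 :=
      aux_norm_mul_le (aux_norm_mul_le
        (aux_norm_mul_le (aux_norm_mul_le (aux_norm_mul_le hR₀op le_rfl) le_rfl)
          hR₀op) le_rfl) hPop
    have tri : ‖-((1 - P₀) * W * R₀ * S) + R₀ * S * W * P₀ - R₀ * S * W * R₀ * W * P₀‖ ≤
        ‖(1 - P₀) * W * R₀ * S‖ + ‖R₀ * S * W * P₀‖ + ‖R₀ * S * W * R₀ * W * P₀‖ := by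
      calc ‖-((1 - P₀) * W * R₀ * S) + R₀ * S * W * P₀ - R₀ * S * W * R₀ * W * P₀‖
          ≤ ‖-((1 - P₀) * W * R₀ * S) + R₀ * S * W * P₀‖ + ‖R₀ * S * W * R₀ * W * P₀‖ :=
            norm_sub_le _ _
        _ ≤ ‖(1 - P₀) * W * R₀ * S‖ + ‖R₀ * S * W * P₀‖ + ‖R₀ * S * W * R₀ * W * P₀‖ := by
            have := norm_add_le (-((1 - P₀) * W * R₀ * S)) (R₀ * S * W * P₀)
            rw [norm_neg] at this
            linarith
    have hfin : ((1 * ‖W‖) * (1/Δ)) * ‖S‖ + (((1/Δ) * ‖S‖) * ‖W‖) * 1 +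
        (((((1/Δ) * ‖S‖) * ‖W‖) * (1/Δ)) * ‖W‖) * 1 = (2 * ‖W‖ / Δ + ‖W‖ ^ 2 / Δ ^ 2) * ‖S‖ := by
      ring
    linarith [tri, b1, b2, b3]
  -- part 3 : integral identity
  · intro t
    set M : E →L[ℂ] E := Complex.I • H with hM
    set N : E →L[ℂ] E := (-Complex.I) • Heff with hN
    have hcoe1 : ∀ τ : ℝ, ((Complex.I * (τ : ℂ)) • H) = τ • M := by
      intro τ
      rw [hM, RCLike.real_smul_eq_coe_smul (K := ℂ), smul_smul, mul_comm]
      rfl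
    have hcoe2 : ∀ τ : ℝ, ((-(Complex.I) * (τ : ℂ)) • Heff) = τ • N := by
      intro τ
      rw [hN, RCLike.real_smul_eq_coe_smul (K := ℂ), smul_smul, mul_comm]
      rfl
    simp only [hcoe1, hcoe2]
    have hexpc : ∀ X : E →L[ℂ] E, Continuous fun τ : ℝ => exp (τ • X) := fun X =>
      (continuous_iff_continuousAt.2 fun x => (exp_analytic (𝕂 := ℂ) x).continuousAt).comp
        (continuous_id.smul continuous_const)
    have hci : ∀ C : E →L[ℂ] E,
        IntervalIntegrable (fun τ : ℝ => exp (τ • M) * C * exp (τ • N))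
          MeasureTheory.volume 0 t :=
      fun C => (((hexpc M).mul continuous_const).mul (hexpc N)).intervalIntegrable 0 t
    have hderiv : ∀ (C : E →L[ℂ] E) (τ : ℝ),
        HasDerivAt (fun s : ℝ => exp (s • M) * C * exp (s • N))
          (exp (τ • M) * (M * C + C * N) * exp (τ • N)) τ := by
      intro C τ
      have hA : HasDerivAt (fun s : ℝ => exp (s • M)) (exp (τ • M) * M) τ := by
        have h := hasDerivAt_exp_smul_const (𝕂 := ℝ) M τ
        exact h
      have hB : HasDerivAt (fun s : ℝ => exp (s • N)) (N * exp (τ • N)) τ := by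
        have h := hasDerivAt_exp_smul_const' (𝕂 := ℝ) N τ
        exact h
      have h := (hA.mul_const C).mul hB
      refine h.congr_deriv ?_
      noncomm_ring
    have hFTC : ∀ C : E →L[ℂ] E,
        (∫ τ in (0:ℝ)..t, exp (τ • M) * (M * C + C * N) * exp (τ • N))
          = exp (t • M) * C * exp (t • N) - C := by
      intro C
      have hcc : IntervalIntegrable
          (fun τ : ℝ => exp (τ • M) * (M * C + C * N) * exp (τ • N))
          MeasureTheory.volume 0 t :=
        (((hexpc M).mul continuous_const).mul (hexpc N)).intervalIntegrable 0 t
      have h := intervalIntegral.integral_eq_sub_of_hasDerivAt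
        (fun τ _ => hderiv C τ) hcc
      simpa [exp_zero] using h
    -- the key operator identity
    have hD : M * (R₀ * S) + (R₀ * S) * N =
        Complex.I • (S + P₀ * W * R₀ * S - Stilde) := by
      have e1 : H₀ * (R₀ * S) = S := by rw [← mul_assoc, hH₀R₀, hQS]
      have e2 : (R₀ * S) * (P₀ * W * P₀) = R₀ * S * W * P₀ := by
        simp only [← mul_assoc]
        rw [hRSP]
      have e3 : (R₀ * S) * (P₀ * W * R₀ * W * P₀) = R₀ * S * W * R₀ * W * P₀ := by
        simp only [← mul_assoc]
        rw [hRSP]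
      have hDop : H * (R₀ * S) - (R₀ * S) * Heff = S + P₀ * W * R₀ * S - Stilde := by
        show (H₀ + W) * (R₀ * S) - (R₀ * S) * (P₀ * W * P₀ - P₀ * W * R₀ * W * P₀)
          = S + P₀ * W * R₀ * S -
            (-((1 - P₀) * W * R₀ * S) + R₀ * S * W * P₀ - R₀ * S * W * R₀ * W * P₀)
        rw [add_mul, e1, mul_sub, e2, e3]
        noncomm_ring
      rw [hM, hN, smul_mul_assoc, mul_smul_comm, neg_smul, ← smul_neg, ← smul_add, ← hDop]
      congr 1
      abel
    have hkey := hFTC (R₀ * S)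
    rw [hD] at hkey
    have hsmul : (fun τ : ℝ => exp (τ • M) * (Complex.I • (S + P₀ * W * R₀ * S - Stilde))
          * exp (τ • N))
        = fun τ : ℝ => Complex.I •
            (exp (τ • M) * (S + P₀ * W * R₀ * S - Stilde) * exp (τ • N)) := by
      funext τ
      rw [mul_smul_comm, smul_mul_assoc]
    rw [hsmul, intervalIntegral.integral_smul] at hkey
    have hexpand : (∫ τ in (0:ℝ)..t,
          exp (τ • M) * (S + P₀ * W * R₀ * S - Stilde) * exp (τ • N))
        = (∫ τ in (0:ℝ)..t, exp (τ • M) * S * exp (τ • N))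
          + (∫ τ in (0:ℝ)..t, exp (τ • M) * (P₀ * W * R₀ * S) * exp (τ • N))
          - (∫ τ in (0:ℝ)..t, exp (τ • M) * Stilde * exp (τ • N)) := by
      rw [← intervalIntegral.integral_add (hci S) (hci (P₀ * W * R₀ * S)),
        ← intervalIntegral.integral_sub ((hci S).add (hci (P₀ * W * R₀ * S))) (hci Stilde)]
      congr 1
      funext τ
      simp only [mul_add, mul_sub, add_mul, sub_mul]
    rw [hexpand] at hkey
    set X := ∫ τ in (0:ℝ)..t, exp (τ • M) * S * exp (τ • N) with hX
    set Y := ∫ τ in (0:ℝ)..t, exp (τ • M) * (P₀ * W * R₀ * S) * exp (τ • N) with hY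
    set Z := ∫ τ in (0:ℝ)..t, exp (τ • M) * Stilde * exp (τ • N) with hZ
    rw [← hkey, smul_smul]
    have : (-Complex.I) * Complex.I = 1 := by
      rw [neg_mul, Complex.I_mul_I, neg_neg]
    rw [this, one_smul]
    abel
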